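/- Let α ∈ (0,1), and suppose positive reals satisfy: for an index set W with distinguished element ℓ, payments p_i ≤ (B/(1-α))·(V_i / D_i) where V_ℓ = A + M with A ≥ 0, and all denominators satisfy D_i > ((1-α)/α)·(Σ_{i∈W} V_i - M). Then Σ_{i∈W} p_i < (B/(1-α))·(α/(1-α) + M/D_ℓ). -/
import Mathlib


open Finset

theorem key_payment_bound {ι : Type*} [DecidableEq ι]
    (W : Finset ι) (ℓ : ι) (hℓ : ℓ ∈ W)
    (p V D : ι → ℝ) (B α A M : ℝ)
    (hB : 0 < B) (hα0 : 0 < α) (hα1 : α < 1)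
    (hA : 0 ≤ A) (hM : 0 ≤ M)
    (hVℓ : V ℓ = A + M)
    (hV : ∀ i ∈ W, 0 ≤ V i)
    (hp : ∀ i ∈ W, p i ≤ B / (1 - α) * (V i / D i))
    (hD : ∀ i ∈ W, D i > (1 - α) / α * ((∑ i ∈ W, V i) - M)) :
    ∑ i ∈ W, p i < B / (1 - α) * (α / (1 - α) + M / D ℓ) := by
  have h1α : (0:ℝ) < 1 - α := by linarith
  set S := ∑ i ∈ W, V i with hS
  have hVlS : V ℓ ≤ S := Finset.single_le_sum hV hℓ
  have hSM : 0 ≤ S - M := by rw [hVℓ] at hVlS; linarith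
  have hc : 0 ≤ (1 - α) / α * (S - M) :=
    mul_nonneg (div_nonneg h1α.le hα0.le) hSM
  obtain ⟨j, hjW, hjle⟩ := W.exists_min_image D ⟨ℓ, hℓ⟩
  have hdj : (1 - α) / α * (S - M) < D j := hD j hjW
  have hdpos : 0 < D j := lt_of_le_of_lt hc hdj
  have hDℓpos : 0 < D ℓ := lt_of_le_of_lt hc (hD ℓ hℓ)
  have hkey : (1 - α) * (S - M) < α * D j := by
    rw [div_mul_eq_mul_div, div_lt_iff₀ hα0] at hdj
    linarith
  -- sum of erase
  have hsum : ∑ i ∈ W, V i / D i = (A + M) / D ℓ + ∑ i ∈ W.erase ℓ, V i / D i := by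
    rw [← hVℓ]; exact (Finset.add_sum_erase W (fun i => V i / D i) hℓ).symm
  have hT1 : ∑ i ∈ W.erase ℓ, V i / D i ≤ ∑ i ∈ W.erase ℓ, V i / D j := by
    apply Finset.sum_le_sum
    intro i hi
    have hiW : i ∈ W := Finset.mem_of_mem_erase hi
    gcongr
    · exact hV i hiW
    · exact hjle i hiW
  have hAD : A / D ℓ ≤ A / D j := by
    gcongr
    exact hjle ℓ hℓ
  have heraseS : ∑ i ∈ W.erase ℓ, V i = S - (A + M) := by
    rw [← hVℓ, hS, Finset.sum_erase_eq_sub hℓ]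
  have hT2 : A / D ℓ + ∑ i ∈ W.erase ℓ, V i / D i ≤ (S - M) / D j := by
    calc A / D ℓ + ∑ i ∈ W.erase ℓ, V i / D i
        ≤ A / D j + ∑ i ∈ W.erase ℓ, V i / D j := by linarith
      _ = (A + ∑ i ∈ W.erase ℓ, V i) / D j := by
          rw [← Finset.sum_div, add_div]
      _ = (S - M) / D j := by rw [heraseS]; ring_nf
  have hT3 : (S - M) / D j < α / (1 - α) := by
    rw [div_lt_div_iff₀ hdpos h1α]
    rcases hSM.eq_or_lt with h | h
    · nlinarith
    · nlinarith
  have hmain : ∑ i ∈ W, V i / D i < α / (1 - α) + M / D ℓ := by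
    rw [hsum, add_div]
    linarith
  calc ∑ i ∈ W, p i ≤ ∑ i ∈ W, B / (1 - α) * (V i / D i) :=
        Finset.sum_le_sum hp
    _ = B / (1 - α) * ∑ i ∈ W, V i / D i := by rw [Finset.mul_sum]
    _ < B / (1 - α) * (α / (1 - α) + M / D ℓ) := by
        exact mul_lt_mul_of_pos_left hmain (div_pos hB h1α)
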